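/- Let (A, ∫_A) and (T, ∫_T) be oriented graded Artinian Gorenstein algebras of socle degrees d and k, and π : A → T a graded algebra map. Then there exists a unique A-module map ι : T(k−d) → A with ι(1_T) = τ_π, where τ_π is the Thom class of π; explicitly, ι is defined by the condition ∫_A ι(t)·a = ∫_T t·π(a) for all a ∈ A, t ∈ T. -/
import Mathlib


/-- An oriented graded Artinian Gorenstein algebra: a finite-dimensional graded
algebra with top (socle) degree `d`, equipped with an orientation `intg`
(a nonzero linear functional supported in degree `d`) whose associated
multiplication pairing is non-degenerate. -/
structure OrientedAG (F : Type) [Field F] {A : Type} [CommRing A] [Algebra F A]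
    (𝒜 : ℕ → Submodule F A) (d : ℕ) : Type where
  fin : FiniteDimensional F A
  top_ne : 𝒜 d ≠ ⊥
  top_vanish : ∀ i, d < i → 𝒜 i = ⊥
  intg : A →ₗ[F] F
  intg_supported : ∀ i, i ≠ d → ∀ a ∈ 𝒜 i, intg a = 0
  intg_ne : intg ≠ 0
  nondeg : ∀ a : A, a ≠ 0 → ∃ b : A, intg (a * b) ≠ 0

/-- If the pairing of `x` against every homogeneous `b` of degree `m` with
`n + m ≠ d` vanishes, then `x` is homogeneous of degree `n`. -/
lemma OrientedAG.mem_of_pairing (F : Type) [Field F] {A : Type} [CommRing A] [Algebra F A]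
    (𝒜 : ℕ → Submodule F A) [GradedAlgebra 𝒜] {d : ℕ} (OA : OrientedAG F 𝒜 d)
    (x : A) (n : ℕ)
    (h : ∀ m, ∀ b ∈ 𝒜 m, n + m ≠ d → OA.intg (x * b) = 0) : x ∈ 𝒜 n := by
  classical
  have hcomp : ∀ j, j ≠ n → (DirectSum.decompose 𝒜 x j : A) = 0 := by
    intro j hj
    by_contra ha
    obtain ⟨b, hb⟩ := OA.nondeg _ ha
    -- decompose b into homogeneous pieces; some piece pairs nontrivially
    have hbsum : ∑ m ∈ (DirectSum.decompose 𝒜 b).support,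
        OA.intg ((DirectSum.decompose 𝒜 x j : A) * (DirectSum.decompose 𝒜 b m : A)) ≠ 0 := by
      rw [← map_sum, ← Finset.mul_sum]
      rw [DirectSum.sum_support_decompose 𝒜 b]
      exact hb
    obtain ⟨m, hmmem, hm⟩ := Finset.exists_ne_zero_of_sum_ne_zero hbsum
    -- the degrees must add to d
    have hjm : j + m = d := by
      by_contra hne
      exact hm (OA.intg_supported _ hne _
        (SetLike.mul_mem_graded (DirectSum.decompose 𝒜 x j).2 (DirectSum.decompose 𝒜 b m).2))
    -- pairing x against that piece equals pairing the j-component against it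
    have hx : OA.intg (x * (DirectSum.decompose 𝒜 b m : A)) =
        OA.intg ((DirectSum.decompose 𝒜 x j : A) * (DirectSum.decompose 𝒜 b m : A)) := by
      conv_lhs => rw [← DirectSum.sum_support_decompose 𝒜 x]
      rw [Finset.sum_mul, map_sum]
      refine Finset.sum_eq_single_of_mem j ?_ ?_
      · simpa [DFinsupp.mem_support_iff, ← ZeroMemClass.coe_eq_zero] using ha
      · intro l _ hl
        apply OA.intg_supported (l + m)
        · omega
        · exact SetLike.mul_mem_graded (DirectSum.decompose 𝒜 x l).2
            (DirectSum.decompose 𝒜 b m).2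
    have hzero : OA.intg (x * (DirectSum.decompose 𝒜 b m : A)) = 0 := by
      apply h m _ (DirectSum.decompose 𝒜 b m).2
      omega
    rw [hzero] at hx
    exact hm hx.symm
  rw [← DirectSum.sum_support_decompose 𝒜 x]
  apply Submodule.sum_mem
  intro j _
  by_cases hj : j = n
  · subst hj; exact (DirectSum.decompose 𝒜 x j).2
  · rw [hcomp j hj]; exact Submodule.zero_mem _


/-- Lemma: existence and uniqueness of the Gysin map.
Given oriented AG algebras `A`, `T` of socle degrees `d`, `k`, a graded algebra
map `π : A → T` and its Thom class `τ`, there is a unique `A`-module map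
`ι : T(k-d) → A` with `ι 1 = τ`; it is characterized by
`∫_A (ι t · a) = ∫_T (t · π a)` and raises degrees by `d - k`. -/
theorem gysinMap_existsUnique
    (F : Type) [Field F] {A T : Type} [CommRing A] [Algebra F A] [CommRing T] [Algebra F T]
    (𝒜 : ℕ → Submodule F A) (𝒯 : ℕ → Submodule F T)
    [GradedAlgebra 𝒜] [GradedAlgebra 𝒯]
    {d k : ℕ} (hk : k ≤ d)
    (OA : OrientedAG F 𝒜 d) (OT : OrientedAG F 𝒯 k)
    (π : A →ₐ[F] T) (hπ : ∀ i, ∀ a ∈ 𝒜 i, π a ∈ 𝒯 i)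
    (τ : A) (hτ_mem : τ ∈ 𝒜 (d - k))
    (hτ : ∀ a : A, OA.intg (τ * a) = OT.intg (π a)) :
    ∃! ι : T →ₗ[F] A,
      (∀ (a : A) (t : T), ι (π a * t) = a * ι t) ∧
      ι 1 = τ ∧
      (∀ (t : T) (a : A), OA.intg (ι t * a) = OT.intg (t * π a)) ∧
      (∀ i, ∀ t ∈ 𝒯 i, ι t ∈ 𝒜 (i + (d - k))) := by
  haveI := OA.fin
  -- Cancellation from nondegeneracy
  have key : ∀ x y : A, (∀ b, OA.intg (x * b) = OA.intg (y * b)) → x = y := by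
    intro x y h
    by_contra hne
    obtain ⟨b, hb⟩ := OA.nondeg (x - y) (sub_ne_zero.mpr hne)
    apply hb
    rw [sub_mul, map_sub, h b, sub_self]
  -- the pairing map A → A* is bijective
  set B : A →ₗ[F] Module.Dual F A := (LinearMap.mul F A).compr₂ OA.intg with hBdef
  have hB : ∀ x y : A, B x y = OA.intg (x * y) := by
    intro x y; simp [hBdef]
  have hinj : Function.Injective B := by
    intro x y hxy
    apply key
    intro b
    have := LinearMap.congr_fun hxy b
    rwa [hB, hB] at this
  have hsurj : Function.Surjective B := by
    have h1 : Module.finrank F A = Module.finrank F (Module.Dual F A) :=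
      Subspace.dual_finrank_eq.symm
    exact (LinearMap.injective_iff_surjective_of_finrank_eq_finrank h1).mp hinj
  set e : A ≃ₗ[F] Module.Dual F A := LinearEquiv.ofBijective B ⟨hinj, hsurj⟩ with hedef
  set Φ : T →ₗ[F] Module.Dual F A :=
    ((LinearMap.mul F T).compr₂ OT.intg).compl₂ π.toLinearMap with hΦdef
  have hΦ : ∀ (t : T) (a : A), Φ t a = OT.intg (t * π a) := by
    intro t a; simp [hΦdef]
  set ι : T →ₗ[F] A := (e.symm : Module.Dual F A →ₗ[F] A).comp Φ with hιdef
  have hι : ∀ (t : T) (a : A), OA.intg (ι t * a) = OT.intg (t * π a) := by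
    intro t a
    have h1 : B (e.symm (Φ t)) = Φ t := e.apply_symm_apply (Φ t)
    have h2 := LinearMap.congr_fun h1 a
    rw [hB, hΦ] at h2
    simpa [hιdef] using h2
  refine ⟨ι, ⟨?_, ?_, hι, ?_⟩, ?_⟩
  · -- A-module property
    intro a t
    apply key
    intro b
    rw [hι, show a * ι t * b = ι t * (a * b) from by ring, hι, map_mul π a b]
    congr 1
    ring
  · -- ι 1 = τ
    apply key
    intro b
    rw [hι, one_mul, ← hτ b]
  · -- grading
    intro i t ht
    apply OA.mem_of_pairing
    intro m b hb hne
    rw [hι t b]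
    refine OT.intg_supported (i + m) ?_ _ (SetLike.mul_mem_graded ht (hπ m b hb))
    omega
  · -- uniqueness
    rintro ι' ⟨_, _, h3, _⟩
    apply LinearMap.ext
    intro t
    apply key
    intro b
    rw [h3, hι]
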